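/- arXiv:2205.00277 — 4 statements merged into one kernel-verified Lean document; each statement's English description precedes it below -/
import Mathlib

section
/- Let A and B be multisets over a type with decidable equality, and let c be a mode of A + B, i.e. for every element x the multiplicity of x in A + B is at most the multiplicity of c in A + B. If c does not occur in A, then c is a mode of B, i.e. for every element x the multiplicity of x in B is at most the multiplicity of c in B. -/
/-- Krizanc et al.: if `c` is a mode of `A + B` and `c` does not occur in `A`,
then `c` is a mode of `B`. -/
theorem mode_of_add_of_not_mem {α : Type*} [DecidableEq α] (A B : Multiset α) (c : α)
    (hmode : ∀ x, (A + B).count x ≤ (A + B).count c)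
    (hc : c ∉ A) :
    ∀ x, B.count x ≤ B.count c := by
  intro x
  have h := hmode x
  simp [Multiset.count_add, Multiset.count_eq_zero.mpr hc] at h
  omega
end

section
/- Let p = (p₁, p₂) ∈ ℝ², let v = (v₁, v₂, v₃) ∈ ℝ³ satisfy max(|p₁ − v₁|, |p₂ − v₂|) ≤ v₃, and let d = (d₁, d₂, d₃) ∈ ℝ³. Then every point of the ray {v + λd : λ ≥ 0} lies above the pyramid ∇_p, i.e. max(|p₁ − (v₁ + λd₁)|, |p₂ − (v₂ + λd₂)|) ≤ v₃ + λd₃ for all λ ≥ 0, if and only if −d₃ ≤ d₁ ≤ d₃ and −d₃ ≤ d₂ ≤ d₃. -/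
private lemma ray_aux (a c d : ℝ) (h : ∀ l : ℝ, 0 ≤ l → |a - l * d| ≤ c + l * d₃)
    : |d| ≤ d₃ := by
  by_contra h'
  push_neg at h'
  have hc : 0 ≤ c := le_trans (abs_nonneg a) (by simpa using h 0 le_rfl)
  set l : ℝ := (c + |a| + 1) / (|d| - d₃) with hl
  have hden : 0 < |d| - d₃ := sub_pos.mpr h'
  have hlpos : 0 < l := div_pos (by positivity) hden
  have h1 := h l hlpos.le
  have h2 : l * |d| - |a| ≤ |a - l * d| := by
    have := abs_sub_abs_le_abs_sub (l * d) a
    rw [abs_sub_comm] at this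
    simpa [abs_mul, abs_of_pos hlpos] using this
  have h3 : l * (|d| - d₃) ≤ c + |a| := by nlinarith
  rw [hl, div_mul_cancel₀ _ hden.ne'] at h3
  linarith

/-- Unbounded-edge case of the lemma characterizing when a simplex lies above a
pyramid: given `v` above `∇_p`, the whole ray `{v + λd : λ ≥ 0}` lies above `∇_p`
iff `−d₃ ≤ d₁ ≤ d₃` and `−d₃ ≤ d₂ ≤ d₃`. -/
theorem ray_above_pyramid_iff (p₁ p₂ v₁ v₂ v₃ d₁ d₂ d₃ : ℝ)
    (hv : max |p₁ - v₁| |p₂ - v₂| ≤ v₃) :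
    (∀ l : ℝ, 0 ≤ l →
        max |p₁ - (v₁ + l * d₁)| |p₂ - (v₂ + l * d₂)| ≤ v₃ + l * d₃) ↔
      (-d₃ ≤ d₁ ∧ d₁ ≤ d₃ ∧ -d₃ ≤ d₂ ∧ d₂ ≤ d₃) := by
  constructor
  · intro h
    have h1 : |d₁| ≤ d₃ := ray_aux (p₁ - v₁) v₃ d₁ (fun l hl => by
      calc |p₁ - v₁ - l * d₁| = |p₁ - (v₁ + l * d₁)| := by ring_nf
        _ ≤ _ := le_trans (le_max_left _ _) (h l hl))
    have h2 : |d₂| ≤ d₃ := ray_aux (p₂ - v₂) v₃ d₂ (fun l hl => by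
      calc |p₂ - v₂ - l * d₂| = |p₂ - (v₂ + l * d₂)| := by ring_nf
        _ ≤ _ := le_trans (le_max_right _ _) (h l hl))
    rw [abs_le] at h1 h2
    exact ⟨h1.1, h1.2, h2.1, h2.2⟩
  · rintro ⟨h1, h2, h3, h4⟩ l hl
    have ha : |p₁ - v₁| ≤ v₃ := le_trans (le_max_left _ _) hv
    have hb : |p₂ - v₂| ≤ v₃ := le_trans (le_max_right _ _) hv
    rw [abs_le] at ha hb
    have hd1 : |l * d₁| ≤ l * d₃ := by
      rw [abs_mul, abs_of_nonneg hl]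
      exact mul_le_mul_of_nonneg_left (abs_le.mpr ⟨h1, h2⟩) hl
    have hd2 : |l * d₂| ≤ l * d₃ := by
      rw [abs_mul, abs_of_nonneg hl]
      exact mul_le_mul_of_nonneg_left (abs_le.mpr ⟨h3, h4⟩) hl
    rw [abs_le] at hd1 hd2
    apply max_le <;> rw [abs_le] <;> constructor <;> nlinarith
end

section
/- Let ε ∈ (0, 1), let i be a natural number, and let f* and f_c be real numbers. If f* < (1/(1 − ε))^(i/2 + 1) + 1 and f_c ≥ (1/(1 − ε))^(i/2) + 1, then f_c ≥ (1 − ε)·f*. -/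
/-- Arithmetic core of the approximation guarantee: if
`f* < (1/(1−ε))^(i/2+1) + 1` and `f_c ≥ (1/(1−ε))^(i/2) + 1`, then
`f_c ≥ (1−ε)·f*`.  The exponents are real exponents. -/
theorem approx_mode_arith (ε : ℝ) (hε : ε ∈ Set.Ioo (0 : ℝ) 1) (i : ℕ)
    (fstar fc : ℝ)
    (h1 : fstar < (1 / (1 - ε)) ^ ((i : ℝ) / 2 + 1) + 1)
    (h2 : fc ≥ (1 / (1 - ε)) ^ ((i : ℝ) / 2) + 1) :
    fc ≥ (1 - ε) * fstar := by
  obtain ⟨hε0, hε1⟩ := hε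
  have h0 : (0:ℝ) < 1 - ε := by linarith
  have ha : (0:ℝ) < 1 / (1 - ε) := by positivity
  have key : (1 / (1 - ε)) ^ ((i : ℝ) / 2 + 1)
      = (1 / (1 - ε)) ^ ((i : ℝ) / 2) * (1 / (1 - ε)) := by
    rw [Real.rpow_add ha, Real.rpow_one]
  have hone : (1 - ε) * (1 / (1 - ε)) = 1 := by field_simp
  have hlt := mul_lt_mul_of_pos_left h1 h0
  rw [key] at hlt
  nlinarith [hlt, h2, Real.rpow_nonneg ha.le ((i : ℝ) / 2)]
end

section
/- Let R and B be finite multisets over a linearly ordered type, let r be an element of R and b an element of B with b < r, and set ℓ = (the number of elements of B strictly smaller than b) + (the number of elements of R strictly smaller than r) + 1. If k is an integer with 1 ≤ k < ℓ, then the k-th smallest element of the multiset R + B equals the k-th smallest element of the multiset B + R^<, where R^< is the submultiset of elements of R that are strictly smaller than r. -/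
theorem sorted_eq_filter_lt {α : Type*} [LinearOrder α] (r : α) (l : List α)
    (h : l.Pairwise (· ≤ ·)) :
    l = l.filter (fun x => decide (x < r)) ++ l.filter (fun x => !decide (x < r)) := by
  refine List.Perm.eq_of_pairwise' h ?_ (List.filter_append_perm _ l).symm
  rw [List.pairwise_append]
  refine ⟨h.filter _, h.filter _, ?_⟩
  intro a ha c hc
  have h1 : a < r := by simpa using (List.of_mem_filter ha)
  have h2 : ¬ c < r := by simpa using (List.of_mem_filter hc)
  exact le_of_lt (lt_of_lt_of_le h1 (le_of_not_gt h2))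


/-- Second case of the rank-query recursion: with `b < r` and
`ℓ = |{x ∈ B : x < b}| + |{x ∈ R : x < r}| + 1`, if `1 ≤ k < ℓ` then the `k`-th
smallest element of `R + B` equals the `k`-th smallest element of `B + R^<`,
where `R^<` consists of the elements of `R` strictly smaller than `r`.
(The `k`-th smallest element, 1-indexed, is the `k`-th entry of the sorted
enumeration of the multiset.) -/
theorem kth_smallest_discard_upper {α : Type*} [LinearOrder α]
    (R B : Multiset α) (r b : α) (hr : r ∈ R) (hb : b ∈ B) (hbr : b < r)
    (k : ℕ) (hk1 : 1 ≤ k)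
    (hk2 : k < Multiset.card (B.filter (· < b)) +
        Multiset.card (R.filter (· < r)) + 1) :
    ((R + B).sort (· ≤ ·)).getD (k - 1) r =
      ((B + R.filter (· < r)).sort (· ≤ ·)).getD (k - 1) r := by
  set p : α → Bool := fun x => decide (x < r) with hp
  set ls := (R + B).sort (· ≤ ·) with hls
  set lt := ((B + R.filter (· < r))).sort (· ≤ ·) with hlt
  have hsls : ls.Pairwise (· ≤ ·) := Multiset.pairwise_sort _ _
  have hslt : lt.Pairwise (· ≤ ·) := Multiset.pairwise_sort _ _
  have hmls : (↑(ls.filter p) : Multiset α) = (R + B).filter (· < r) := by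
    rw [← Multiset.filter_coe, Multiset.sort_eq]
  have hmlt : (↑(lt.filter p) : Multiset α) = (R + B).filter (· < r) := by
    rw [← Multiset.filter_coe, Multiset.sort_eq]
    rw [Multiset.filter_add, Multiset.filter_add, Multiset.filter_filter,
      add_comm]
    congr 1
    exact Multiset.filter_congr (fun x _ => by tauto)
  have heq : ls.filter p = lt.filter p := by
    refine List.Perm.eq_of_pairwise' (hsls.filter _) (hslt.filter _) ?_
    rw [← Multiset.coe_eq_coe, hmls, hmlt]
  have hcard : Multiset.card (B.filter (· < b)) + Multiset.card (R.filter (· < r))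
      ≤ (ls.filter p).length := by
    have : (ls.filter p).length = Multiset.card ((R + B).filter (· < r)) := by
      rw [← hmls, Multiset.coe_card]
    rw [this, Multiset.filter_add, Multiset.card_add, add_comm]
    gcongr
    exact (Multiset.monotone_filter_right B
      (fun x hx => lt_trans hx hbr))
  have hklt : k - 1 < (ls.filter p).length :=
    lt_of_lt_of_le (by omega) hcard
  have hklt' : k - 1 < (lt.filter p).length := by rwa [← heq]
  calc ls.getD (k - 1) r
      = ((ls.filter p) ++ ls.filter (fun x => !p x)).getD (k - 1) r := by
        rw [← sorted_eq_filter_lt r ls hsls]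
    _ = (ls.filter p).getD (k - 1) r := List.getD_append _ _ _ _ hklt
    _ = (lt.filter p).getD (k - 1) r := by rw [heq]
    _ = ((lt.filter p) ++ lt.filter (fun x => !p x)).getD (k - 1) r :=
        (List.getD_append _ _ _ _ hklt').symm
    _ = lt.getD (k - 1) r := by rw [← sorted_eq_filter_lt r lt hslt]
end
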